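/- Let (X, μ) be a measure space and let ξ, f : X → ℝ be square-integrable (L²) functions with |f| ≤ 1 almost everywhere. Then the following are equivalent: (i) for every square-integrable function z : X → ℝ with |z| ≤ 1 almost everywhere, ∫ ξ·(f - z) dμ ≥ 0; (ii) for almost every x ∈ X and every c ∈ [-1,1], ξ(x)·(f(x) - c) ≥ 0, i.e. ξ(x) ∈ ∂I_{[-1,1]}(f(x)) almost everywhere. -/

import Mathlib

open MeasureTheory

lemma l2_mul_integrable {X : Type*} [MeasurableSpace X] {μ : Measure X}
    {f g : X → ℝ} (hf : MemLp f 2 μ) (hg : MemLp g 2 μ) :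
    Integrable (fun x => f x * g x) μ := by
  refine ((hf.integrable_sq.add hg.integrable_sq).mono'
    (hf.aestronglyMeasurable.mul hg.aestronglyMeasurable) ?_)
  filter_upwards with x
  simp only [Real.norm_eq_abs, abs_mul, Pi.add_apply]
  nlinarith [sq_nonneg (|f x| - |g x|), abs_nonneg (f x), abs_nonneg (g x),
    sq_abs (f x), sq_abs (g x)]

/-- Let `ξ, f ∈ L²(μ)` with `|f| ≤ 1` a.e. Then `∫ ξ·(f - z) dμ ≥ 0` for every
`z ∈ L²(μ)` with `|z| ≤ 1` a.e., if and only if for a.e. `x` and every `c ∈ [-1,1]`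
one has `ξ(x)·(f(x) - c) ≥ 0`, i.e. `ξ(x) ∈ ∂I_{[-1,1]}(f(x))` a.e. -/
theorem stmt_14 {X : Type*} [MeasurableSpace X] (μ : Measure X)
    (ξ f : X → ℝ) (hξ : MemLp ξ 2 μ) (hf : MemLp f 2 μ)
    (hf1 : ∀ᵐ x ∂μ, |f x| ≤ 1) :
    (∀ z : X → ℝ, MemLp z 2 μ → (∀ᵐ x ∂μ, |z x| ≤ 1) →
        0 ≤ ∫ x, ξ x * (f x - z x) ∂μ) ↔
      (∀ᵐ x ∂μ, ∀ c ∈ Set.Icc (-1 : ℝ) 1, 0 ≤ ξ x * (f x - c)) := by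
  constructor
  · intro H
    set ξ' := hξ.aestronglyMeasurable.mk ξ with hξ'def
    have hξm : StronglyMeasurable ξ' := hξ.aestronglyMeasurable.stronglyMeasurable_mk
    have hξeq : ξ =ᵐ[μ] ξ' := hξ.aestronglyMeasurable.ae_eq_mk
    have hξ2 : MemLp ξ' 2 μ := hξ.ae_eq hξeq
    set f' := hf.aestronglyMeasurable.mk f with hf'def
    have hfm : StronglyMeasurable f' := hf.aestronglyMeasurable.stronglyMeasurable_mk
    have hfeq : f =ᵐ[μ] f' := hf.aestronglyMeasurable.ae_eq_mk
    have hf2 : MemLp f' 2 μ := hf.ae_eq hfeq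
    have hf1' : ∀ᵐ x ∂μ, |f' x| ≤ 1 := by
      filter_upwards [hf1, hfeq] with x h1 h2; rwa [h2] at h1
    set s : X → ℝ := fun x => if 0 ≤ ξ' x then 1 else -1 with hsdef
    have hsm : Measurable s :=
      Measurable.ite (measurableSet_le measurable_const hξm.measurable)
        measurable_const measurable_const
    set g : X → ℝ := fun x => ξ' x * (f' x - s x) with hgdef
    set B : ℕ → Set X := fun n => {x | g x < 0 ∧ ((n : ℝ) + 1)⁻¹ ≤ ξ' x ^ 2} with hBdef
    have hgm : Measurable g := hξm.measurable.mul (hfm.measurable.sub hsm)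
    have hBmeas : ∀ n, MeasurableSet (B n) := fun n =>
      (measurableSet_lt hgm measurable_const).inter
        (measurableSet_le measurable_const (hξm.measurable.pow_const 2))
    have hBfin : ∀ n, μ (B n) < ⊤ := by
      intro n
      have h1 : μ {x | ((n : ℝ) + 1)⁻¹ ≤ ξ' x ^ 2} < ⊤ := by
        have := hξ2.integrable_sq.measure_ge_lt_top
          (ε := ((n : ℝ) + 1)⁻¹) (by positivity)
        exact this
      exact lt_of_le_of_lt (measure_mono fun x hx => hx.2) h1
    have key : ∀ n, μ (B n) = 0 := by
      intro n
      set z : X → ℝ := fun x => if x ∈ B n then s x else f' x with hzdef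
      have hzrw : z = fun x => f' x + (B n).indicator (fun y => s y - f' y) x := by
        funext x
        by_cases hx : x ∈ B n <;> simp [hzdef, Set.indicator, hx]
      have hind : MemLp (fun x => (B n).indicator (fun y => s y - f' y) x) 2 μ := by
        rw [show (fun x => (B n).indicator (fun y => s y - f' y) x)
            = (B n).indicator (fun y => s y - f' y) from rfl,
          memLp_indicator_iff_restrict (hBmeas n)]
        haveI : IsFiniteMeasure (μ.restrict (B n)) :=
          ⟨by rw [Measure.restrict_apply_univ]; exact hBfin n⟩
        refine MemLp.of_bound ((hsm.sub hfm.measurable).aestronglyMeasurable) 2 ?_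
        have hf1'' : ∀ᵐ x ∂(μ.restrict (B n)), |f' x| ≤ 1 := ae_restrict_of_ae hf1'
        filter_upwards [hf1''] with x hx
        have hs1 : |s x| ≤ 1 := by
          by_cases h : 0 ≤ ξ' x <;> simp [hsdef, h]
        calc ‖s x - f' x‖ ≤ |s x| + |f' x| := abs_sub _ _
          _ ≤ 2 := by linarith
      have hz2 : MemLp z 2 μ := by rw [hzrw]; exact hf2.add hind
      have hz1 : ∀ᵐ x ∂μ, |z x| ≤ 1 := by
        filter_upwards [hf1'] with x hx
        by_cases h : x ∈ B n
        · by_cases h' : 0 ≤ ξ' x <;> simp [hzdef, h, hsdef, h']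
        · simpa [hzdef, h] using hx
      have h0 := H z hz2 hz1
      have hieq : ∫ x, ξ x * (f x - z x) ∂μ
          = ∫ x, (B n).indicator g x ∂μ := by
        apply integral_congr_ae
        filter_upwards [hξeq, hfeq] with x h1 h2
        by_cases hx : x ∈ B n <;>
          simp [hzdef, hgdef, Set.indicator, hx, h1, h2]
      have hint : Integrable (fun x => (B n).indicator g x) μ := by
        have h1 : Integrable (fun x => ξ' x *
            (-(B n).indicator (fun y => s y - f' y) x)) μ :=
          l2_mul_integrable hξ2 hind.neg
        refine h1.congr (Filter.Eventually.of_forall fun x => ?_)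
        by_cases hx : x ∈ B n <;> simp [hgdef, Set.indicator, hx]
      have hnonneg : 0 ≤ fun x => (B n).indicator (fun y => -g y) x := by
        intro x
        by_cases hx : x ∈ B n
        · simp only [Set.indicator, hx, if_pos]
          exact le_of_lt (by simpa using neg_pos.mpr hx.1)
        · simp [Set.indicator, hx]
      have hintneg : Integrable (fun x => (B n).indicator (fun y => -g y) x) μ := by
        refine hint.neg.congr (Filter.Eventually.of_forall fun x => ?_)
        by_cases hx : x ∈ B n <;> simp [Set.indicator, hx]
      have hle : ∫ x, (B n).indicator (fun y => -g y) x ∂μ ≤ 0 := by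
        have : ∫ x, (B n).indicator (fun y => -g y) x ∂μ
            = -∫ x, (B n).indicator g x ∂μ := by
          rw [← integral_neg]
          apply integral_congr_ae
          refine Filter.Eventually.of_forall fun x => ?_
          by_cases hx : x ∈ B n <;> simp [Set.indicator, hx]
        rw [this]
        linarith [hieq ▸ h0]
      have hzero : ∫ x, (B n).indicator (fun y => -g y) x ∂μ = 0 :=
        le_antisymm hle (integral_nonneg hnonneg)
      have haezero := (integral_eq_zero_iff_of_nonneg hnonneg hintneg).mp hzero
      rw [measure_eq_zero_iff_ae_notMem]
      filter_upwards [haezero] with x hx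
      intro hxB
      have : (B n).indicator (fun y => -g y) x = -g x := by
        simp [Set.indicator, hxB]
      rw [this] at hx
      have hlt : g x < 0 := hxB.1
      simp only [Pi.zero_apply] at hx
      linarith
    have hgae : ∀ᵐ x ∂μ, 0 ≤ g x := by
      have hsub : {x | ¬ 0 ≤ g x} ⊆ ⋃ n, B n := by
        intro x hx
        have hglt : g x < 0 := not_le.mp hx
        have hξne : ξ' x ≠ 0 := by
          intro h; rw [hgdef] at hglt; simp [h] at hglt
        have hsq : 0 < ξ' x ^ 2 := by positivity
        obtain ⟨n, hn⟩ := exists_nat_one_div_lt hsq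
        exact Set.mem_iUnion.mpr ⟨n, hglt, by rw [one_div] at hn; linarith⟩
      rw [Filter.eventually_iff, mem_ae_iff]
      have : {x | 0 ≤ g x}ᶜ = {x | ¬ 0 ≤ g x} := rfl
      rw [this]
      exact measure_mono_null hsub (measure_iUnion_null key)
    filter_upwards [hξeq, hfeq, hf1', hgae] with x h1 h2 h3 h4
    intro c hc
    obtain ⟨hc1, hc2⟩ := Set.mem_Icc.mp hc
    rw [h1, h2]
    by_cases hxi : 0 ≤ ξ' x
    · have hg4 : 0 ≤ ξ' x * (f' x - 1) := by simpa [hgdef, hsdef, hxi] using h4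
      nlinarith [mul_nonneg hxi (sub_nonneg.mpr hc2)]
    · have hg4 : 0 ≤ ξ' x * (f' x + 1) := by simpa [hgdef, hsdef, hxi] using h4
      push_neg at hxi
      nlinarith [mul_nonneg (le_of_lt (neg_pos.mpr hxi)) (by linarith : (0:ℝ) ≤ 1 + c)]
  · intro H z hz hz1
    refine integral_nonneg_of_ae ?_
    filter_upwards [H, hz1] with x hx hzx
    exact hx (z x) (Set.mem_Icc.mpr ⟨neg_le_of_abs_le hzx, le_of_abs_le hzx⟩)
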